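/- arXiv:1209.0628 — 2 statements merged into one kernel-verified Lean document; each statement's English description precedes it below -/
import Mathlib

section
/- For integers m ≥ 1 and n ≥ 1, the integral T_{m,n} = ∫₀¹ G_m(x)·xⁿ dx has the closed form T_{m,n} = (1/(n+1))·Σ_{j=1}^{n} (−1)ʲ·(C(n+1,j)/C(m+j,m))·G_{m+j} + 2·(−1)^{n+1}·G_{n+m+1}/((n+m+1)·C(n+m,m)), where C(a,b) denotes the binomial coefficient and G_k = G_k(0) are the Genocchi numbers. -/
open Finset

/-- The Bernoulli polynomial `Bₙ(x)`, with generating function `t·e^{xt}/(e^t−1)`. -/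
noncomputable def bernoulliPoly (n : ℕ) (x : ℝ) : ℝ :=
  Polynomial.eval x ((Polynomial.bernoulli n).map (algebraMap ℚ ℝ))

/-- The Genocchi polynomial `Gₙ(x) = 2·Bₙ(x) − 2^{n+1}·Bₙ(x/2)`, with generating
function `2t·e^{xt}/(e^t+1)`. -/
noncomputable def genocchiPoly (n : ℕ) (x : ℝ) : ℝ :=
  2 * bernoulliPoly n x - 2 ^ (n + 1) * bernoulliPoly n (x / 2)

/-- The Genocchi number `Gₙ = Gₙ(0)`. -/
noncomputable def genocchi (n : ℕ) : ℝ := genocchiPoly n 0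

/-- The Euler polynomial `Eₙ(x) = (2·B_{n+1}(x) − 2^{n+2}·B_{n+1}(x/2))/(n+1)`, with
generating function `2·e^{xt}/(e^t+1)`. -/
noncomputable def eulerPoly (n : ℕ) (x : ℝ) : ℝ :=
  (2 * bernoulliPoly (n + 1) x - 2 ^ (n + 2) * bernoulliPoly (n + 1) (x / 2)) / (n + 1)

/-- The Euler number (at zero) `Eₙ = Eₙ(0)`. -/
noncomputable def eulerNum (n : ℕ) : ℝ := eulerPoly n 0

lemma bp_cont (n : ℕ) : Continuous (bernoulliPoly n) :=
  ((Polynomial.bernoulli n).map (algebraMap ℚ ℝ)).continuous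

lemma bp_hasDerivAt (k : ℕ) (x : ℝ) :
    HasDerivAt (bernoulliPoly (k+1)) (((k:ℝ)+1) * bernoulliPoly k x) x := by
  have h := ((Polynomial.bernoulli (k+1)).map (algebraMap ℚ ℝ)).hasDerivAt x
  refine h.congr_deriv ?_
  rw [Polynomial.derivative_map, Polynomial.derivative_bernoulli_add_one]
  push_cast
  simp [bernoulliPoly, Polynomial.map_mul]

lemma bp_shift_hasDerivAt (k : ℕ) (c x : ℝ) :
    HasDerivAt (fun x => bernoulliPoly (k+1) ((x+c)/2)) ((((k:ℝ)+1)/2) * bernoulliPoly k ((x+c)/2)) x := by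
  have hin : HasDerivAt (fun x : ℝ => (x+c)/2) (1/2) x := by
    simpa using ((hasDerivAt_id x).add_const c).div_const 2
  have := (bp_hasDerivAt k ((x+c)/2)).comp x hin
  refine this.congr_deriv ?_
  ring

lemma bp_one_eq (k : ℕ) (hk : k ≠ 1) : bernoulliPoly k 1 = bernoulliPoly k 0 := by
  unfold bernoulliPoly
  rw [Polynomial.eval_one_map, Polynomial.eval_zero_map, Polynomial.bernoulli_eval_one,
    Polynomial.bernoulli_eval_zero, bernoulli_eq_bernoulli'_of_ne_one hk]

lemma bp_zero_eval (x : ℝ) : bernoulliPoly 0 x = 1 := by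
  simp [bernoulliPoly]

lemma int_bp_shift (k : ℕ) (c : ℝ) :
    ∫ x in (0:ℝ)..1, bernoulliPoly (k+1) ((x+c)/2)
      = 2/((k:ℝ)+2) * (bernoulliPoly (k+2) ((1+c)/2) - bernoulliPoly (k+2) ((0+c)/2)) := by
  have hk2 : ((k:ℝ)+2) ≠ 0 := by positivity
  have hD : ∀ x ∈ Set.uIcc (0:ℝ) 1,
      HasDerivAt (fun x => 2/((k:ℝ)+2) * bernoulliPoly (k+2) ((x+c)/2))
        (bernoulliPoly (k+1) ((x+c)/2)) x := by
    intro x _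
    have h := (bp_shift_hasDerivAt (k+1) c x).const_mul (2/((k:ℝ)+2))
    refine h.congr_deriv ?_
    push_cast
    field_simp
    ring
  rw [intervalIntegral.integral_eq_sub_of_hasDerivAt hD
    (((bp_cont (k+1)).comp (by continuity)).intervalIntegrable 0 1)]
  ring

lemma int_bp (k : ℕ) :
    ∫ x in (0:ℝ)..1, bernoulliPoly (k+1) x
      = 1/((k:ℝ)+2) * (bernoulliPoly (k+2) 1 - bernoulliPoly (k+2) 0) := by
  have hk2 : ((k:ℝ)+2) ≠ 0 := by positivity
  have hD : ∀ x ∈ Set.uIcc (0:ℝ) 1,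
      HasDerivAt (fun x => 1/((k:ℝ)+2) * bernoulliPoly (k+2) x)
        (bernoulliPoly (k+1) x) x := by
    intro x _
    have h := (bp_hasDerivAt (k+1) x).const_mul (1/((k:ℝ)+2))
    refine h.congr_deriv ?_
    push_cast
    field_simp
    ring
  rw [intervalIntegral.integral_eq_sub_of_hasDerivAt hD ((bp_cont (k+1)).intervalIntegrable 0 1)]
  ring

lemma R_zero : ∀ (k : ℕ) (x : ℝ),
    2^k * (bernoulliPoly k ((x+0)/2) + bernoulliPoly k ((x+1)/2)) = 2 * bernoulliPoly k x := by
  intro k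
  induction k with
  | zero => intro x; simp [bp_zero_eval]; ring
  | succ k ih =>
    have c0 : Continuous fun x : ℝ => bernoulliPoly (k+1) ((x+0)/2) :=
      (bp_cont (k+1)).comp (by continuity)
    have c1 : Continuous fun x : ℝ => bernoulliPoly (k+1) ((x+1)/2) :=
      (bp_cont (k+1)).comp (by continuity)
    set F : ℝ → ℝ := fun x =>
      2^(k+1) * (bernoulliPoly (k+1) ((x+0)/2) + bernoulliPoly (k+1) ((x+1)/2))
        - 2 * bernoulliPoly (k+1) x with hF
    have hD : ∀ x : ℝ, HasDerivAt F 0 x := by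
      intro x
      have h0 := bp_shift_hasDerivAt k 0 x
      have h1 := bp_shift_hasDerivAt k 1 x
      have h2 := bp_hasDerivAt k x
      have h := (((h0.add h1).const_mul ((2:ℝ)^(k+1))).sub (h2.const_mul 2))
      refine h.congr_deriv ?_
      have := ih x
      push_cast
      linear_combination ((k:ℝ)+1) * this
    have hC : ∀ x : ℝ, F x = F 0 := by
      intro x
      exact is_const_of_deriv_eq_zero (fun y => (hD y).differentiableAt)
        (fun y => (hD y).deriv) x 0
    have hI : ∫ x in (0:ℝ)..1, F x = F 0 := by
      rw [intervalIntegral.integral_congr (g := fun _ => F 0) (fun x _ => hC x)]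
      simp only [intervalIntegral.integral_const, smul_eq_mul, sub_zero, one_mul]
    have hI0 : ∫ x in (0:ℝ)..1, F x = 0 := by
      have hsub := intervalIntegral.integral_sub (μ := MeasureTheory.volume) (a := (0:ℝ)) (b := 1)
        (f := fun x : ℝ => 2^(k+1) * (bernoulliPoly (k+1) ((x+0)/2) + bernoulliPoly (k+1) ((x+1)/2)))
        (g := fun x : ℝ => 2 * bernoulliPoly (k+1) x)
        ((continuous_const.mul (c0.add c1)).intervalIntegrable 0 1)
        ((continuous_const.mul (bp_cont (k+1))).intervalIntegrable 0 1)
      rw [intervalIntegral.integral_const_mul, intervalIntegral.integral_const_mul,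
        intervalIntegral.integral_add (c0.intervalIntegrable 0 1) (c1.intervalIntegrable 0 1)] at hsub
      simp only [hF]
      rw [hsub, int_bp_shift k 0, int_bp_shift k 1, int_bp k]
      norm_num
      rw [bp_one_eq (k+2) (by omega)]
      ring
    intro x
    have hx : F x = 0 := by rw [hC x, ← hI, hI0]
    have := sub_eq_zero.mp hx
    linarith [this]

lemma gp_cont (n : ℕ) : Continuous (genocchiPoly n) := by
  unfold genocchiPoly
  exact (continuous_const.mul (bp_cont n)).sub
    (continuous_const.mul ((bp_cont n).comp (by continuity)))

lemma gp_hasDerivAt (k : ℕ) (x : ℝ) :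
    HasDerivAt (genocchiPoly (k+1)) (((k:ℝ)+1) * genocchiPoly k x) x := by
  unfold genocchiPoly
  have h2 : HasDerivAt (fun x : ℝ => bernoulliPoly (k+1) (x/2)) ((((k:ℝ)+1)/2) * bernoulliPoly k (x/2)) x := by
    have := bp_shift_hasDerivAt k 0 x
    simpa using this
  have h := ((bp_hasDerivAt k x).const_mul 2).sub (h2.const_mul ((2:ℝ)^(k+1+1)))
  refine h.congr_deriv ?_
  ring

lemma gp_one (k : ℕ) (hk : k ≠ 1) : genocchiPoly k 1 = - genocchi k := by
  have h := R_zero k 0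
  norm_num at h
  have h2 := bp_one_eq k hk
  unfold genocchi genocchiPoly
  norm_num
  linear_combination 2 * h2 - 2 * h

lemma integral_gp (k : ℕ) (hk : 1 ≤ k) :
    ∫ x in (0:ℝ)..1, genocchiPoly k x = -2 * genocchi (k+1) / ((k:ℝ)+1) := by
  have hk1 : ((k:ℝ)+1) ≠ 0 := by positivity
  have hD : ∀ x ∈ Set.uIcc (0:ℝ) 1,
      HasDerivAt (fun x => genocchiPoly (k+1) x / ((k:ℝ)+1)) (genocchiPoly k x) x := by
    intro x _
    have h := (gp_hasDerivAt k x).div_const (((k:ℝ)+1))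
    simpa [mul_div_assoc, mul_div_cancel_left₀ _ hk1] using h
  rw [intervalIntegral.integral_eq_sub_of_hasDerivAt hD ((gp_cont k).intervalIntegrable 0 1)]
  rw [gp_one (k+1) (by omega)]
  show -genocchi (k+1) / ((k:ℝ)+1) - genocchi (k+1) / ((k:ℝ)+1) = _
  ring

lemma ibp_step (m n : ℕ) (hm : 1 ≤ m) :
    ∫ x in (0:ℝ)..1, genocchiPoly m x * x^(n+1)
      = -genocchi (m+1)/((m:ℝ)+1)
        - (((n:ℝ)+1)/((m:ℝ)+1)) * ∫ x in (0:ℝ)..1, genocchiPoly (m+1) x * x^n := by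
  have hm1 : ((m:ℝ)+1) ≠ 0 := by positivity
  have hu : ∀ x ∈ Set.uIcc (0:ℝ) 1,
      HasDerivAt (fun x : ℝ => x^(n+1)) ((((n:ℝ)+1) * x^n)) x := by
    intro x _
    have := hasDerivAt_pow (n+1) x
    simpa using this
  have hv : ∀ x ∈ Set.uIcc (0:ℝ) 1,
      HasDerivAt (fun x => genocchiPoly (m+1) x / ((m:ℝ)+1)) (genocchiPoly m x) x := by
    intro x _
    have h := (gp_hasDerivAt m x).div_const (((m:ℝ)+1))
    simpa [mul_div_assoc, mul_div_cancel_left₀ _ hm1] using h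
  have hIBP := intervalIntegral.integral_mul_deriv_eq_deriv_mul hu hv
    ((continuous_const.mul (continuous_pow n)).intervalIntegrable 0 1)
    ((gp_cont m).intervalIntegrable 0 1)
  -- hIBP : ∫ x^(n+1) * gp m x = 1^(n+1) * (gp (m+1) 1/(m+1)) - 0 - ∫ (n+1)x^n * (gp(m+1)x/(m+1))
  have e1 : ∫ x in (0:ℝ)..1, genocchiPoly m x * x^(n+1)
      = ∫ x in (0:ℝ)..1, (fun x : ℝ => x^(n+1)) x * genocchiPoly m x := by
    apply intervalIntegral.integral_congr
    intro x _
    simp [mul_comm]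
  have e2 : ∫ x in (0:ℝ)..1, (((n:ℝ)+1) * x^n) * (genocchiPoly (m+1) x / ((m:ℝ)+1))
      = (((n:ℝ)+1)/((m:ℝ)+1)) * ∫ x in (0:ℝ)..1, genocchiPoly (m+1) x * x^n := by
    rw [← intervalIntegral.integral_const_mul]
    apply intervalIntegral.integral_congr
    intro x _
    field_simp
  rw [e1, hIBP, e2, gp_one (m+1) (by omega)]
  norm_num

lemma fact_ne (k : ℕ) : ((k.factorial : ℝ)) ≠ 0 :=
  Nat.cast_ne_zero.mpr (Nat.factorial_ne_zero k)

lemma main_aux : ∀ (n m : ℕ), 1 ≤ m →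
    ∫ x in (0:ℝ)..1, genocchiPoly m x * x^n
      = (∑ i ∈ range n, (-1:ℝ)^(i+1)
            * ((n.factorial : ℝ) * (m.factorial : ℝ)
                / (((n-i).factorial : ℝ) * ((m+i+1).factorial : ℝ))) * genocchi (m+i+1))
        + (-1:ℝ)^n * ((n.factorial : ℝ) * (m.factorial : ℝ) / ((m+n).factorial : ℝ))
            * ∫ x in (0:ℝ)..1, genocchiPoly (m+n) x := by
  intro n
  induction n with
  | zero =>
    intro m hm
    simp [fact_ne m, div_self]
  | succ n ih =>
    intro m hm
    rw [ibp_step m n hm, ih (m+1) (by omega), Finset.sum_range_succ']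
    have hsum : (∑ i ∈ range n, (-1:ℝ)^(i+1+1)
            * (((n+1).factorial : ℝ) * (m.factorial : ℝ)
                / (((n+1-(i+1)).factorial : ℝ) * ((m+(i+1)+1).factorial : ℝ))) * genocchi (m+(i+1)+1))
        = (-(((n:ℝ)+1)/((m:ℝ)+1))) * ∑ i ∈ range n, (-1:ℝ)^(i+1)
            * ((n.factorial : ℝ) * ((m+1).factorial : ℝ)
                / (((n-i).factorial : ℝ) * ((m+1+i+1).factorial : ℝ))) * genocchi (m+1+i+1) := by
      rw [Finset.mul_sum]
      apply Finset.sum_congr rfl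
      intro i hi
      have e1 : m+1+i+1 = m+(i+1)+1 := by omega
      have e2 : n+1-(i+1) = n-i := by omega
      rw [e1, e2]
      push_cast [Nat.factorial_succ]
      have h1 := fact_ne (n-i)
      have h2 := fact_ne (m+(i+1)+1)
      have h3 : ((m:ℝ)+1) ≠ 0 := by positivity
      field_simp
      ring
    rw [hsum]
    have e3 : m+1+n = m+(n+1) := by omega
    rw [e3]
    have h1 := fact_ne (m+(n+1))
    have h2 := fact_ne (m+1)
    have h3 : ((m:ℝ)+1) ≠ 0 := by positivity
    have h4 := fact_ne n
    have h5 := fact_ne (n+1)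
    push_cast [Nat.factorial_succ]
    field_simp
    ring


theorem T_closed_form (m n : ℕ) (hm : 1 ≤ m) (hn : 1 ≤ n) :
    (∫ x in (0:ℝ)..1, genocchiPoly m x * x ^ n) =
      (1 / ((n : ℝ) + 1)) * (∑ j ∈ Finset.Icc 1 n,
          (-1 : ℝ) ^ j * (((n + 1).choose j : ℝ) / ((m + j).choose m : ℝ)) * genocchi (m + j))
        + 2 * (-1 : ℝ) ^ (n + 1) * genocchi (n + m + 1) /
            (((n + m + 1 : ℕ) : ℝ) * ((n + m).choose m : ℝ)) := by
  rw [main_aux n m hm, integral_gp (m+n) (le_trans hm (Nat.le_add_right m n))]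
  have hIcc : ∑ j ∈ Finset.Icc 1 n,
        (-1:ℝ)^j * (((n+1).choose j : ℝ) / ((m+j).choose m : ℝ)) * genocchi (m+j)
      = ∑ i ∈ range n,
        (-1:ℝ)^(1+i) * (((n+1).choose (1+i) : ℝ) / ((m+(1+i)).choose m : ℝ)) * genocchi (m+(1+i)) := by
    rw [← Finset.Ico_add_one_right_eq_Icc, Finset.sum_Ico_eq_sum_range]
    simp
  rw [hIcc, Finset.mul_sum]
  congr 1
  · apply Finset.sum_congr rfl
    intro i hi
    have hin : i < n := Finset.mem_range.mp hi
    have e1 : 1+i = i+1 := by omega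
    have e2 : m+(i+1) = m+i+1 := by omega
    rw [e1, e2, Nat.cast_choose ℝ (show i+1 ≤ n+1 by omega),
      Nat.cast_choose ℝ (show m ≤ m+i+1 by omega)]
    have e3 : n+1-(i+1) = n-i := by omega
    have e4 : m+i+1-m = i+1 := by omega
    rw [e3, e4]
    have h1 := fact_ne (n-i)
    have h2 := fact_ne (m+i+1)
    have h3 := fact_ne (i+1)
    have h4 := fact_ne m
    have h5 := fact_ne n
    have h6 : ((n:ℝ)+1) ≠ 0 := by positivity
    push_cast [Nat.factorial_succ]
    field_simp
  · have e : n+m = m+n := by omega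
    rw [e, Nat.cast_choose ℝ (show m ≤ m+n by omega)]
    have e4 : m+n-m = n := by omega
    rw [e4]
    have h1 := fact_ne (m+n)
    have h2 := fact_ne m
    have h3 := fact_ne n
    have h4 : ((m:ℝ)+(n:ℝ)+1) ≠ 0 := by positivity
    push_cast
    field_simp
    ring
end

section
/- Let n ≥ 1 and let p(x) = Σ_{l=0}^{n} G_l(x)·x^{n−l}. Then for each k with 0 ≤ k ≤ n, the k-th derivative of p is given by p^{(k)}(x) = ((n+1)!/(n−k+1)!)·Σ_{l=k}^{n} G_{l−k}(x)·x^{n−l}. -/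
open Finset

lemma hasDerivAt_bernoulliPoly (k : ℕ) (x : ℝ) :
    HasDerivAt (bernoulliPoly k) (k * bernoulliPoly (k - 1) x) x := by
  convert ((Polynomial.bernoulli k).map <| algebraMap ℚ ℝ).hasDerivAt x using 1
  all_goals try rfl
  simp only [bernoulliPoly, Polynomial.derivative_map, Polynomial.derivative_bernoulli k,
    Polynomial.map_mul, Polynomial.map_natCast, Polynomial.eval_mul, Polynomial.eval_natCast]

lemma hasDerivAt_genocchiPoly (n : ℕ) (x : ℝ) :
    HasDerivAt (genocchiPoly n) (n * genocchiPoly (n - 1) x) x := by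
  have h1 := hasDerivAt_bernoulliPoly n x
  have h2 : HasDerivAt (fun y : ℝ => bernoulliPoly n (y / 2))
      ((n * bernoulliPoly (n - 1) (x / 2)) * (1 / 2)) x := by
    have := (hasDerivAt_bernoulliPoly n (x / 2)).comp x ((hasDerivAt_id x).div_const 2)
    simpa [Function.comp_def] using this
  have h : HasDerivAt (genocchiPoly n)
      (2 * (n * bernoulliPoly (n - 1) x) -
        2 ^ (n + 1) * ((n * bernoulliPoly (n - 1) (x / 2)) * (1 / 2))) x :=
    (h1.const_mul 2).sub (h2.const_mul (2 ^ (n + 1)))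
  convert h using 1
  rcases Nat.eq_zero_or_pos n with h0 | h0
  · simp [h0]
  · obtain ⟨m, rfl⟩ : ∃ m, n = m + 1 := ⟨n - 1, (Nat.succ_pred_eq_of_pos h0).symm⟩
    simp only [Nat.add_sub_cancel, genocchiPoly]
    push_cast
    ring

/-- The sum `p_n(y) = ∑_{l=0}^{n} G_l(y) y^{n-l}`. -/
noncomputable def genSum (n : ℕ) (y : ℝ) : ℝ :=
  ∑ l ∈ Finset.range (n + 1), genocchiPoly l y * y ^ (n - l)

lemma contDiff_polyEval (p : Polynomial ℝ) : ContDiff ℝ ⊤ (fun x => p.eval x) := by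
  induction p using Polynomial.induction_on' with
  | add p q hp hq => simp only [Polynomial.eval_add]; exact hp.add hq
  | monomial n a =>
      simp only [Polynomial.eval_monomial]
      exact contDiff_const.mul (contDiff_id.pow n)

lemma contDiff_genocchiPoly (l : ℕ) : ContDiff ℝ ⊤ (fun y => genocchiPoly l y) := by
  unfold genocchiPoly bernoulliPoly
  exact (contDiff_const.mul (contDiff_polyEval _)).sub
    (contDiff_const.mul ((contDiff_polyEval _).comp (contDiff_id.div_const 2)))

lemma contDiff_genSum (n : ℕ) : ContDiff ℝ ⊤ (genSum n) := by
  unfold genSum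
  exact ContDiff.sum fun l _ => (contDiff_genocchiPoly l).mul (contDiff_id.pow _)

lemma hasDerivAt_genSum (n : ℕ) (hn : 1 ≤ n) (x : ℝ) :
    HasDerivAt (genSum n) ((n + 1) * genSum (n - 1) x) x := by
  have key : ∀ l ∈ Finset.range (n + 1),
      HasDerivAt (fun y => genocchiPoly l y * y ^ (n - l))
        ((l : ℝ) * genocchiPoly (l - 1) x * x ^ (n - l) +
          genocchiPoly l x * (((n - l : ℕ) : ℝ) * x ^ (n - l - 1))) x := fun l _ =>
    (hasDerivAt_genocchiPoly l x).mul (hasDerivAt_pow (n - l) x)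
  have h := HasDerivAt.sum key
  convert h using 1
  all_goals try rfl
  · funext y; simp only [genSum, Finset.sum_apply]
  obtain ⟨m, rfl⟩ : ∃ m, n = m + 1 := ⟨n - 1, (Nat.succ_pred_eq_of_pos hn).symm⟩
  rw [Finset.sum_add_distrib]
  have e1 : ∑ l ∈ Finset.range (m + 1 + 1), (l : ℝ) * genocchiPoly (l - 1) x * x ^ (m + 1 - l)
      = ∑ i ∈ Finset.range (m + 1), ((i : ℝ) + 1) * genocchiPoly i x * x ^ (m - i) := by
    rw [Finset.sum_range_succ']
    simp only [Nat.cast_zero, zero_mul, add_zero, Nat.cast_add, Nat.cast_one,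
      Nat.add_sub_cancel, Nat.succ_sub_succ, Nat.sub_zero]
  have e2 : ∑ l ∈ Finset.range (m + 1 + 1),
        genocchiPoly l x * (((m + 1 - l : ℕ) : ℝ) * x ^ (m + 1 - l - 1))
      = ∑ i ∈ Finset.range (m + 1),
        genocchiPoly i x * (((m + 1 - i : ℕ) : ℝ) * x ^ (m - i)) := by
    rw [Finset.sum_range_succ]
    simp only [Nat.sub_self, Nat.cast_zero, zero_mul, mul_zero, add_zero]
    refine Finset.sum_congr rfl fun i hi => ?_
    have : m + 1 - i - 1 = m - i := by omega
    rw [this]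
  rw [e1, e2, ← Finset.sum_add_distrib, genSum, Nat.add_sub_cancel, Finset.mul_sum]
  refine Finset.sum_congr rfl fun i hi => ?_
  have him : i ≤ m := Nat.lt_succ_iff.mp (Finset.mem_range.mp hi)
  have hc : ((m + 1 - i : ℕ) : ℝ) = (m : ℝ) + 1 - i := by
    rw [Nat.cast_sub (by omega)]; push_cast; ring
  rw [hc]
  push_cast
  ring

lemma iteratedDeriv_const_mul' (k : ℕ) (c : ℝ) {f : ℝ → ℝ} (hf : ContDiff ℝ ⊤ f) (x : ℝ) :
    iteratedDeriv k (fun z => c * f z) x = c * iteratedDeriv k f x := by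
  rw [← iteratedDerivWithin_univ, ← iteratedDerivWithin_univ]
  exact iteratedDerivWithin_const_mul (Set.mem_univ x) uniqueDiffOn_univ c
    ((hf.of_le le_top).contDiffOn x (Set.mem_univ x))

lemma iter_genSum (k : ℕ) : ∀ n : ℕ, k ≤ n → ∀ x : ℝ,
    iteratedDeriv k (genSum n) x
      = (((n + 1).factorial : ℝ) / ((n - k + 1).factorial : ℝ)) * genSum (n - k) x := by
  induction k with
  | zero =>
      intro n _ x
      simp [iteratedDeriv_zero, Nat.sub_zero,
        div_self (by exact_mod_cast (n + 1).factorial_ne_zero : ((n + 1).factorial : ℝ) ≠ 0)]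
  | succ k ih =>
      intro n hk x
      have hn1 : 1 ≤ n := le_trans (Nat.one_le_iff_ne_zero.mpr (by omega)) hk
      rw [iteratedDeriv_succ']
      have hd : deriv (genSum n) = fun y => ((n : ℝ) + 1) * genSum (n - 1) y := by
        funext y; exact (hasDerivAt_genSum n hn1 y).deriv
      rw [hd, iteratedDeriv_const_mul' k _ (contDiff_genSum (n - 1)) x,
        ih (n - 1) (by omega) x]
      have h1 : n - 1 + 1 = n := by omega
      have h2 : n - 1 - k = n - (k + 1) := by omega
      rw [h1, h2]
      have h4 : ((n + 1).factorial : ℝ) = ((n : ℝ) + 1) * (n.factorial : ℝ) := by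
        rw [Nat.factorial_succ]; push_cast; ring
      rw [h4]
      ring

theorem iteratedDeriv_sum_genocchi_pow (n : ℕ) (hn : 1 ≤ n) (k : ℕ) (hk : k ≤ n) (x : ℝ) :
    iteratedDeriv k (fun y : ℝ => ∑ l ∈ Finset.range (n + 1), genocchiPoly l y * y ^ (n - l)) x =
      (((n + 1).factorial : ℝ) / ((n - k + 1).factorial : ℝ)) *
        ∑ l ∈ Finset.Icc k n, genocchiPoly (l - k) x * x ^ (n - l) := by
  have h := iter_genSum k n hk x
  rw [show (fun y : ℝ => ∑ l ∈ Finset.range (n + 1), genocchiPoly l y * y ^ (n - l))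
      = genSum n from rfl, h]
  congr 1
  rw [genSum, ← Finset.Ico_add_one_right_eq_Icc, Finset.sum_Ico_eq_sum_range]
  have hcard : n + 1 - k = n - k + 1 := by omega
  rw [hcard]
  refine Finset.sum_congr rfl fun i hi => ?_
  have hik : i ≤ n - k := Nat.lt_succ_iff.mp (Finset.mem_range.mp hi)
  have h1 : k + i - k = i := by omega
  have h2 : n - (k + i) = n - k - i := by omega
  rw [h1, h2]
end
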